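/- For an odd prime p and n ≥ 1, the number of orbits of the Borel subgroup Γ₀(ℤ/pⁿℤ) acting on the set F₁(ℤ/pⁿℤ) of unimodular pairs equals 2·p^{(n-1)/2} if n is odd, and p^{n/2} + p^{n/2 - 1} if n is even. -/

import Mathlib

open Matrix

/-- The Borel subgroup `Γ₀(R)` of upper triangular matrices in `SL₂(R)`. -/
def Gamma0 (R : Type*) [CommRing R] : Subgroup (Matrix.SpecialLinearGroup (Fin 2) R) where
  carrier := {A | A.1 1 0 = 0}
  one_mem' := by simp [Matrix.one_apply]
  mul_mem' := by
    intro a b ha hb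
    simp only [Set.mem_setOf_eq] at *
    have : ((a * b : Matrix.SpecialLinearGroup (Fin 2) _)).1 1 0
        = a.1 1 0 * b.1 0 0 + a.1 1 1 * b.1 1 0 := by
      simp [Matrix.mul_apply, Fin.sum_univ_two]
    rw [this, ha, hb]; ring
  inv_mem' := by
    intro a ha
    simp only [Set.mem_setOf_eq] at *
    rw [Matrix.SpecialLinearGroup.SL2_inv_expl]
    simp [ha]

/-- A pair is unimodular (over a local ring) if one of its entries is a unit. -/
def IsUnimodular {R : Type*} [CommRing R] (v : Fin 2 → R) : Prop :=
  IsUnit (v 0) ∨ IsUnit (v 1)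

def P1Setoid (R : Type*) [CommRing R] : Setoid {v : Fin 2 → R // IsUnimodular v} where
  r x y := ∃ u : Rˣ, u • x.1 = y.1
  iseqv := by
    refine ⟨fun x => ⟨1, one_smul _ _⟩, ?_, ?_⟩
    · rintro x y ⟨u, h⟩
      exact ⟨u⁻¹, by rw [← h, inv_smul_smul]⟩
    · rintro x y z ⟨u, h⟩ ⟨w, h2⟩
      exact ⟨w * u, by rw [← h2, ← h]; exact (smul_smul w u x.1).symm ▸ rfl⟩

/-- The projective line over `R`: unimodular pairs up to unit scaling. -/
def P1 (R : Type*) [CommRing R] := Quotient (P1Setoid R)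

def P1.mk {R : Type*} [CommRing R] (v : Fin 2 → R) (h : IsUnimodular v) : P1 R :=
  Quotient.mk (P1Setoid R) ⟨v, h⟩

theorem isUnimodular_mulVec {R : Type*} [CommRing R] [IsLocalRing R]
    (g : Matrix.SpecialLinearGroup (Fin 2) R) {v : Fin 2 → R} (hv : IsUnimodular v) :
    IsUnimodular (g.1.mulVec v) := by
  by_contra h
  rw [IsUnimodular, not_or] at h
  obtain ⟨h0, h1⟩ := h
  have hv' : v = (g⁻¹).1.mulVec (g.1.mulVec v) := by
    rw [Matrix.mulVec_mulVec, ← Matrix.SpecialLinearGroup.coe_mul, inv_mul_cancel]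
    simp
  have key : ∀ i, ¬ IsUnit (v i) := by
    intro i
    rw [hv']
    have hexp : (g⁻¹).1.mulVec (g.1.mulVec v) i
        = (g⁻¹).1 i 0 * (g.1.mulVec v 0) + (g⁻¹).1 i 1 * (g.1.mulVec v 1) := by
      simp [Matrix.mulVec, dotProduct, Fin.sum_univ_two, Matrix.vecHead, Matrix.vecTail]
    rw [hexp]
    intro hu
    have m0 : (g⁻¹).1 i 0 * (g.1.mulVec v 0) ∈ nonunits R := by
      intro hc
      exact h0 (isUnit_of_mul_isUnit_right hc)
    have m1 : (g⁻¹).1 i 1 * (g.1.mulVec v 1) ∈ nonunits R := by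
      intro hc
      exact h1 (isUnit_of_mul_isUnit_right hc)
    exact (IsLocalRing.nonunits_add m0 m1) hu
  rcases hv with h | h
  · exact key 0 h
  · exact key 1 h

noncomputable instance P1.smul {R : Type*} [CommRing R] [IsLocalRing R] :
    SMul (Matrix.SpecialLinearGroup (Fin 2) R) (P1 R) where
  smul g := Quotient.map
    (fun v => ⟨g.1.mulVec v.1, isUnimodular_mulVec g v.2⟩)
    (by
      rintro x y ⟨u, h⟩
      refine ⟨u, ?_⟩
      simp only [← h]
      rw [Units.smul_def, Units.smul_def, Matrix.mulVec_smul])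

theorem P1.smul_mk {R : Type*} [CommRing R] [IsLocalRing R]
    (g : Matrix.SpecialLinearGroup (Fin 2) R) (v : Fin 2 → R) (h : IsUnimodular v) :
    g • (P1.mk v h) = P1.mk (g.1.mulVec v) (isUnimodular_mulVec g h) := rfl

noncomputable instance P1.mulAction {R : Type*} [CommRing R] [IsLocalRing R] :
    MulAction (Matrix.SpecialLinearGroup (Fin 2) R) (P1 R) where
  one_smul := by
    intro x
    induction x using Quotient.ind with
    | _ v =>
      show Quotient.map _ _ _ = _
      rw [Quotient.map_mk]
      congr 1
      exact Subtype.ext (by simp)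
  mul_smul := by
    intro g h x
    induction x using Quotient.ind with
    | _ v =>
      show Quotient.map _ _ _ = Quotient.map _ _ (Quotient.map _ _ _)
      rw [Quotient.map_mk, Quotient.map_mk, Quotient.map_mk]
      congr 1
      exact Subtype.ext (by
        simp [Matrix.mulVec_mulVec]
        refine ⟨?_, ?_⟩ <;> simp only [Matrix.mul_apply, Fin.sum_univ_two] <;> ring)

theorem zmod_pow_isUnit_iff (p : ℕ) [hp : Fact p.Prime] (n : ℕ) [NeZero n]
    (x : ZMod (p^n)) : IsUnit x ↔ ¬ (p ∣ x.val) := by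
  haveI : NeZero (p^n) := ⟨pow_ne_zero n hp.out.ne_zero⟩
  conv_lhs => rw [← ZMod.natCast_rightInverse x]
  rw [ZMod.isUnit_iff_coprime]
  rw [Nat.coprime_pow_right_iff (Nat.pos_of_ne_zero (NeZero.ne n))]
  rw [Nat.coprime_comm]
  exact hp.out.coprime_iff_not_dvd

instance zmod_pow_isLocalRing (p : ℕ) [hp : Fact p.Prime] (n : ℕ) [NeZero n] :
    IsLocalRing (ZMod (p^n)) := by
  haveI : NeZero (p^n) := ⟨pow_ne_zero n hp.out.ne_zero⟩
  haveI : Fact (1 < p^n) :=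
    ⟨Nat.one_lt_pow (NeZero.ne n) hp.out.one_lt⟩
  refine IsLocalRing.of_nonunits_add ?_
  intro a b ha hb
  rw [mem_nonunits_iff, zmod_pow_isUnit_iff, not_not] at ha hb ⊢
  rw [ZMod.val_add]
  rw [Nat.dvd_mod_iff (dvd_pow_self p (NeZero.ne n))]
  exact Nat.dvd_add ha hb

theorem isUnimodular_pair_left {R : Type*} [CommRing R] {a b : R} (h : IsUnit a) :
    IsUnimodular ![a, b] := Or.inl (by simpa using h)

theorem isUnimodular_pair_right {R : Type*} [CommRing R] {a b : R} (h : IsUnit b) :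
    IsUnimodular ![a, b] := Or.inr (by simpa using h)

/-- The set of unimodular pairs in `R²`. -/
abbrev F1 (R : Type*) [CommRing R] := {v : Fin 2 → R // IsUnimodular v}

noncomputable instance F1.smul {R : Type*} [CommRing R] [IsLocalRing R] :
    SMul (Matrix.SpecialLinearGroup (Fin 2) R) (F1 R) :=
  ⟨fun g v => ⟨g.1.mulVec v.1, isUnimodular_mulVec g v.2⟩⟩

noncomputable instance F1.mulAction {R : Type*} [CommRing R] [IsLocalRing R] :
    MulAction (Matrix.SpecialLinearGroup (Fin 2) R) (F1 R) where
  one_smul v := Subtype.ext (by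
    show (1 : Matrix.SpecialLinearGroup (Fin 2) R).1.mulVec v.1 = v.1
    simp)
  mul_smul g h v := Subtype.ext (by
    show ((g * h : Matrix.SpecialLinearGroup (Fin 2) R)).1.mulVec v.1
      = g.1.mulVec (h.1.mulVec v.1)
    simp [Matrix.mulVec_mulVec]
    refine ⟨?_, ?_⟩ <;> simp only [Matrix.mul_apply, Fin.sum_univ_two] <;> ring)

/-- The unipotent subgroup `Γ₁(R)` of matrices `(1 b; 0 1)` in `SL₂(R)`. -/
def Gamma1 (R : Type*) [CommRing R] : Subgroup (Matrix.SpecialLinearGroup (Fin 2) R) where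
  carrier := {A | A.1 0 0 = 1 ∧ A.1 1 1 = 1 ∧ A.1 1 0 = 0}
  one_mem' := by simp [Matrix.one_apply]
  mul_mem' := by
    intro a b ha hb
    simp only [Set.mem_setOf_eq] at *
    obtain ⟨ha1, ha2, ha3⟩ := ha
    obtain ⟨hb1, hb2, hb3⟩ := hb
    have e : ∀ i j : Fin 2, ((a * b : Matrix.SpecialLinearGroup (Fin 2) _)).1 i j
        = a.1 i 0 * b.1 0 j + a.1 i 1 * b.1 1 j := by
      intro i j
      simp [Matrix.mul_apply, Fin.sum_univ_two]
    refine ⟨?_, ?_, ?_⟩ <;> rw [e] <;>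
      simp [ha1, ha2, ha3, hb1, hb2, hb3]
  inv_mem' := by
    intro a ha
    simp only [Set.mem_setOf_eq] at *
    obtain ⟨ha1, ha2, ha3⟩ := ha
    rw [Matrix.SpecialLinearGroup.SL2_inv_expl]
    simp [ha1, ha2, ha3]

section Infra
set_option linter.unusedSectionVars false

open Finset

variable (p : ℕ) [hp : Fact p.Prime] (n : ℕ) [NeZero n]

instance : NeZero p := ⟨hp.out.ne_zero⟩

/-- valuation of an element of ZMod (p^n) -/
def pval (b : ZMod (p^n)) : ℕ := if b = 0 then n else b.val.factorization p

/-- unit part -/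
def wpart (b : ZMod (p^n)) : ZMod (p^n) :=
  if b = 0 then 1 else ((b.val / p ^ pval p n b : ℕ) : ZMod (p^n))

theorem dvd_val_iff {k : ℕ} (hk : k ≤ n) (x : ZMod (p^n)) :
    p^k ∣ x.val ↔ (p : ZMod (p^n))^k ∣ x := by
  constructor
  · rintro ⟨m, hm⟩
    refine ⟨(m : ZMod (p^n)), ?_⟩
    have h1 : ((x.val : ℕ) : ZMod (p^n)) = x := ZMod.natCast_zmod_val x
    rw [← h1, hm]
    push_cast
    ring
  · rintro ⟨y, hy⟩
    have h1 : x = ((p^k * y.val : ℕ) : ZMod (p^n)) := by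
      rw [hy]; push_cast [ZMod.natCast_zmod_val]; ring
    have h2 : x.val = (p^k * y.val) % p^n := by rw [h1, ZMod.val_natCast]
    rw [h2, Nat.dvd_mod_iff (pow_dvd_pow p hk)]
    exact Dvd.dvd.mul_right (dvd_refl _) _

theorem pk_eq_zero_iff {k : ℕ} : (p : ZMod (p^n))^k = 0 ↔ n ≤ k := by
  have h : ((p^k : ℕ) : ZMod (p^n)) = (p : ZMod (p^n))^k := by push_cast; ring
  rw [← h, ZMod.natCast_eq_zero_iff,
    Nat.pow_dvd_pow_iff_le_right hp.out.one_lt]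

theorem p_nonunit : ¬ IsUnit ((p : ℕ) : ZMod (p^n)) := by
  rw [zmod_pow_isUnit_iff, not_not, ZMod.val_natCast,
    Nat.dvd_mod_iff (dvd_pow_self p (NeZero.ne n))]

theorem pval_le (b : ZMod (p^n)) : pval p n b ≤ n := by
  unfold pval
  split
  · exact le_rfl
  · rename_i hb
    have hbv : b.val ≠ 0 := fun h => hb (by
      have := ZMod.natCast_zmod_val b
      rw [h] at this; simpa using this.symm)
    have h1 : p ^ (b.val.factorization p) ≤ b.val :=
      Nat.le_of_dvd (Nat.pos_of_ne_zero hbv) (Nat.ordProj_dvd _ _)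
    have h2 : b.val < p^n := ZMod.val_lt b
    have := lt_of_le_of_lt h1 h2
    exact le_of_lt ((Nat.pow_lt_pow_iff_right hp.out.one_lt).mp this)

theorem wpart_isUnit (b : ZMod (p^n)) : IsUnit (wpart p n b) := by
  unfold wpart
  split
  · exact isUnit_one
  · rename_i hb
    have hbv : b.val ≠ 0 := fun h => hb (by
      have := ZMod.natCast_zmod_val b
      rw [h] at this; simpa using this.symm)
    rw [zmod_pow_isUnit_iff, ZMod.val_natCast,
      Nat.dvd_mod_iff (dvd_pow_self p (NeZero.ne n))]
    have h : pval p n b = b.val.factorization p := by unfold pval; rw [if_neg hb]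
    rw [h]
    exact (Nat.Prime.coprime_iff_not_dvd hp.out).mp (Nat.coprime_ordCompl hp.out hbv)

theorem pval_spec (b : ZMod (p^n)) : b = (p : ZMod (p^n))^(pval p n b) * wpart p n b := by
  by_cases hb : b = 0
  · rw [hb]
    have h1 : pval p n (0 : ZMod (p^n)) = n := by unfold pval; rw [if_pos rfl]
    rw [h1, (pk_eq_zero_iff p n).mpr le_rfl, zero_mul]
  · have h1 : pval p n b = b.val.factorization p := by unfold pval; rw [if_neg hb]
    have h2 : wpart p n b = ((b.val / p ^ b.val.factorization p : ℕ) : ZMod (p^n)) := by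
      unfold wpart; rw [if_neg hb, h1]
    rw [h1, h2]
    conv_lhs => rw [← ZMod.natCast_zmod_val b,
      ← Nat.ordProj_mul_ordCompl_eq_self b.val p]
    push_cast
    ring

theorem pval_unique {b : ZMod (p^n)} {k : ℕ} (hk : k ≤ n) {w : ZMod (p^n)}
    (hw : IsUnit w) (hb : b = (p : ZMod (p^n))^k * w) : pval p n b = k := by
  by_cases h0 : b = 0
  · have hpk : (p : ZMod (p^n))^k = 0 := by
      have h1 : (p : ZMod (p^n))^k * w = 0 := by rw [← hb, h0]
      have h2 : (p : ZMod (p^n))^k * (w * (↑hw.unit⁻¹ : ZMod (p^n))) = 0 := by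
        rw [← mul_assoc, h1, zero_mul]
      rwa [IsUnit.mul_val_inv, mul_one] at h2
    have h3 : n ≤ k := (pk_eq_zero_iff p n).mp hpk
    have h4 : k = n := le_antisymm hk h3
    unfold pval; rw [if_pos h0, h4]
  · have hkn : k < n := by
      rcases lt_or_eq_of_le hk with h | h
      · exact h
      · exfalso; apply h0
        rw [hb, h, (pk_eq_zero_iff p n).mpr le_rfl, zero_mul]
    have hbv : b.val ≠ 0 := fun h => h0 (by
      have := ZMod.natCast_zmod_val b
      rw [h] at this; simpa using this.symm)
    unfold pval; rw [if_neg h0]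
    have hdvd : p^k ∣ b.val := by
      rw [dvd_val_iff p n hk]
      exact ⟨w, hb⟩
    have hndvd : ¬ p^(k+1) ∣ b.val := by
      intro hcon
      rw [dvd_val_iff p n hkn] at hcon
      obtain ⟨y, hy⟩ := hcon
      have h2 : (p : ZMod (p^n))^k
          = (p : ZMod (p^n))^(k+1) * y * (↑hw.unit⁻¹ : ZMod (p^n)) := by
        have h1 : (p : ZMod (p^n))^k * w = (p : ZMod (p^n))^(k+1) * y := by
          rw [← hb, hy]
        have h2 : (p : ZMod (p^n))^k * (w * (↑hw.unit⁻¹ : ZMod (p^n)))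
            = (p : ZMod (p^n))^(k+1) * y * (↑hw.unit⁻¹ : ZMod (p^n)) := by
          rw [← mul_assoc, h1]
        rwa [IsUnit.mul_val_inv, mul_one] at h2
      have key : (p : ZMod (p^n))^k
          * (1 - (p : ZMod (p^n)) * (y * (↑hw.unit⁻¹ : ZMod (p^n)))) = 0 := by
        linear_combination h2
      have hunit : IsUnit (1 - (p : ZMod (p^n)) * (y * (↑hw.unit⁻¹ : ZMod (p^n)))) := by
        apply IsLocalRing.isUnit_one_sub_self_of_mem_nonunits
        intro hcon2
        exact p_nonunit p n (isUnit_of_mul_isUnit_left hcon2)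
      have hzero : (p : ZMod (p^n))^k = 0 := by
        have h3 := congrArg (· * (↑hunit.unit⁻¹ : ZMod (p^n))) key
        simpa [mul_assoc, IsUnit.mul_val_inv] using h3
      have := (pk_eq_zero_iff p n).mp hzero
      omega
    have h1 : k ≤ b.val.factorization p :=
      (Nat.Prime.pow_dvd_iff_le_factorization hp.out hbv).mp hdvd
    have h2 : ¬ (k + 1 ≤ b.val.factorization p) := fun h =>
      hndvd ((Nat.Prime.pow_dvd_iff_le_factorization hp.out hbv).mpr h)
    omega

theorem pk_mul_eq_zero_iff {k : ℕ} (hk : k ≤ n) (z : ZMod (p^n)) :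
    (p : ZMod (p^n))^k * z = 0 ↔ (p : ZMod (p^n))^(n-k) ∣ z := by
  constructor
  · intro h
    have h1 : ((p^k * z.val : ℕ) : ZMod (p^n)) = 0 := by
      push_cast [ZMod.natCast_zmod_val]; exact h
    rw [ZMod.natCast_eq_zero_iff] at h1
    have h2 : p^k * p^(n-k) ∣ p^k * z.val := by
      rw [← pow_add]
      have h3 : k + (n - k) = n := by omega
      rwa [h3]
    have h3 : p^(n-k) ∣ z.val :=
      (mul_dvd_mul_iff_left (pow_ne_zero k hp.out.ne_zero)).mp h2
    exact (dvd_val_iff p n (Nat.sub_le n k) z).mp h3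
  · rintro ⟨t, ht⟩
    rw [ht, ← mul_assoc, ← pow_add]
    have h3 : k + (n - k) = n := by omega
    rw [h3, (pk_eq_zero_iff p n).mpr le_rfl, zero_mul]

end Infra
section Classify

set_option linter.unusedSectionVars false

open Finset

variable (p : ℕ) [hp : Fact p.Prime] (n : ℕ) [NeZero n]

/-- Target type classifying the orbits. -/
abbrev TT := Σ k : Fin (n+1), (ZMod (p ^ (min k.1 (n - k.1))))ˣ

/-- Reduction to the classifying modulus. -/
def proj (k : ℕ) : ZMod (p^n) →+* ZMod (p^(min k (n-k))) :=
  ZMod.castHom (pow_dvd_pow p (le_trans (min_le_right k (n-k)) (Nat.sub_le n k))) (ZMod (p^(min k (n-k))))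

theorem proj_apply (k : ℕ) (z : ZMod (p^n)) :
    proj p n k z = ((z.val : ℕ) : ZMod (p^(min k (n-k)))) := by
  unfold proj
  rw [ZMod.castHom_apply, ← ZMod.natCast_val]

theorem proj_eq_zero_iff (k : ℕ) (z : ZMod (p^n)) :
    proj p n k z = 0 ↔ (p : ZMod (p^n))^(min k (n-k)) ∣ z := by
  rw [proj_apply, ZMod.natCast_eq_zero_iff]
  exact dvd_val_iff p n (le_trans (min_le_right _ _) (Nat.sub_le n k)) z

theorem proj_eq_iff (k : ℕ) (x y : ZMod (p^n)) :
    proj p n k x = proj p n k y ↔ (p : ZMod (p^n))^(min k (n-k)) ∣ x - y := by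
  rw [← sub_eq_zero, ← map_sub, proj_eq_zero_iff]

noncomputable def phiAux (k : ℕ) (hk : k ≤ n) (c : ZMod (p^n)) : TT p n :=
  ⟨⟨k, by omega⟩,
    letI := Classical.dec (IsUnit (proj p n k c))
    if h : IsUnit (proj p n k c) then h.unit else 1⟩

theorem phiAux_congr {k k' : ℕ} (h : k = k') {hk : k ≤ n} {hk' : k' ≤ n}
    {c c' : ZMod (p^n)} (h2 : (p : ZMod (p^n))^(min k (n-k)) ∣ c - c') :
    phiAux p n k hk c = phiAux p n k' hk' c' := by
  subst h
  have hproj : proj p n k c = proj p n k c' := (proj_eq_iff p n k c c').mpr h2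
  unfold phiAux
  exact congrArg _ (by rw [hproj])

theorem phiAux_inj {k k' : ℕ} {hk : k ≤ n} {hk' : k' ≤ n} {c c' : ZMod (p^n)}
    (hc : IsUnit (proj p n k c)) (hc' : IsUnit (proj p n k' c'))
    (h : phiAux p n k hk c = phiAux p n k' hk' c') :
    k = k' ∧ (p : ZMod (p^n))^(min k (n-k)) ∣ c - c' := by
  have h1 : k = k' := congrArg (fun t : TT p n => t.1.1) h
  subst h1
  refine ⟨rfl, ?_⟩
  rw [← proj_eq_iff]
  unfold phiAux at h
  injection h with h1 h2
  rw [dif_pos hc, dif_pos hc'] at h2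
  have := congrArg (Units.val) h2
  rwa [IsUnit.unit_spec, IsUnit.unit_spec] at this

end Classify
section PhiDef

set_option linter.unusedSectionVars false

open Finset

variable (p : ℕ) [hp : Fact p.Prime] (n : ℕ) [NeZero n]

theorem b_nonunit {b : ZMod (p^n)} (h : 1 ≤ pval p n b) : ¬ IsUnit b := by
  intro hb
  have hspec := pval_spec p n b
  have hpk : IsUnit ((p : ZMod (p^n)) ^ (pval p n b)) := by
    rw [hspec] at hb
    exact isUnit_of_mul_isUnit_left hb
  rw [isUnit_pow_iff (by omega : pval p n b ≠ 0)] at hpk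
  exact p_nonunit p n hpk

theorem Phi_isUnit (v : F1 (ZMod (p^n))) :
    IsUnit (proj p n (pval p n (v.1 1)) (wpart p n (v.1 1) * v.1 0)) := by
  set k := pval p n (v.1 1) with hk
  by_cases h : min k (n - k) = 0
  · haveI : Subsingleton (ZMod (p ^ (min k (n-k)))) := by
      rw [h, pow_zero]
      infer_instance
    exact isUnit_of_subsingleton _
  · have ha : IsUnit (v.1 0) := by
      refine v.2.resolve_right ?_
      apply b_nonunit p n
      omega
    exact ((wpart_isUnit p n (v.1 1)).mul ha).map _

/-- The complete orbit invariant. -/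
noncomputable def Phi (v : F1 (ZMod (p^n))) : TT p n :=
  phiAux p n (pval p n (v.1 1)) (pval_le p n _) (wpart p n (v.1 1) * v.1 0)

theorem gamma0_smul_apply (g : Gamma0 (ZMod (p^n))) (v : F1 (ZMod (p^n))) :
    (g • v).1 0 = (g : Matrix.SpecialLinearGroup (Fin 2) (ZMod (p^n))).1 0 0 * v.1 0
        + (g : Matrix.SpecialLinearGroup (Fin 2) (ZMod (p^n))).1 0 1 * v.1 1
    ∧ (g • v).1 1 = (g : Matrix.SpecialLinearGroup (Fin 2) (ZMod (p^n))).1 1 1 * v.1 1 := by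
  have h0 : (g : Matrix.SpecialLinearGroup (Fin 2) (ZMod (p^n))).1 1 0 = 0 := g.2
  constructor
  · show ((g : Matrix.SpecialLinearGroup (Fin 2) (ZMod (p^n))).1.mulVec v.1) 0 = _
    simp [Matrix.mulVec, dotProduct, Fin.sum_univ_two, Matrix.vecHead, Matrix.vecTail]
  · show ((g : Matrix.SpecialLinearGroup (Fin 2) (ZMod (p^n))).1.mulVec v.1) 1 = _
    simp [Matrix.mulVec, dotProduct, Fin.sum_univ_two, h0, Matrix.vecHead, Matrix.vecTail]

theorem gamma0_det (g : Gamma0 (ZMod (p^n))) :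
    (g : Matrix.SpecialLinearGroup (Fin 2) (ZMod (p^n))).1 0 0
      * (g : Matrix.SpecialLinearGroup (Fin 2) (ZMod (p^n))).1 1 1 = 1 := by
  have h0 : (g : Matrix.SpecialLinearGroup (Fin 2) (ZMod (p^n))).1 1 0 = 0 := g.2
  have hdet := (g : Matrix.SpecialLinearGroup (Fin 2) (ZMod (p^n))).2
  rw [Matrix.det_fin_two] at hdet
  rw [h0, mul_zero, sub_zero] at hdet
  exact hdet

theorem key_dvd {k : ℕ} (hkn : k ≤ n) (u d x a b W W2 s : ZMod (p^n))
    (hud : u * d = 1) (hb : b = (p : ZMod (p^n))^k * W)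
    (hs : W2 - d * W = (p : ZMod (p^n))^(n-k) * s) :
    (p : ZMod (p^n))^(min k (n-k)) ∣ W2 * (u * a + x * b) - W * a := by
  set m := min k (n - k) with hm
  have e1 : (p : ZMod (p^n))^k = (p : ZMod (p^n))^m * (p : ZMod (p^n))^(k-m) := by
    rw [← pow_add]; congr 1; omega
  have e2 : (p : ZMod (p^n))^(n-k) = (p : ZMod (p^n))^m * (p : ZMod (p^n))^(n-k-m) := by
    rw [← pow_add]; congr 1; omega
  have hs' : W2 = d * W + (p : ZMod (p^n))^(n-k) * s := by rw [← hs]; ring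
  refine ⟨(p : ZMod (p^n))^(k-m) * (d * W * x * W)
    + (p : ZMod (p^n))^(n-k-m) * s * (u * a + x * b), ?_⟩
  rw [hs', hb, e1, e2]
  linear_combination (W * a) * hud

theorem Phi_smul (g : Gamma0 (ZMod (p^n))) (v : F1 (ZMod (p^n))) :
    Phi p n (g • v) = Phi p n v := by
  obtain ⟨h0, h1⟩ := gamma0_smul_apply p n g v
  have hud : (g : Matrix.SpecialLinearGroup (Fin 2) (ZMod (p^n))).1 0 0
      * (g : Matrix.SpecialLinearGroup (Fin 2) (ZMod (p^n))).1 1 1 = 1 := gamma0_det p n g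
  have hdu : IsUnit ((g : Matrix.SpecialLinearGroup (Fin 2) (ZMod (p^n))).1 1 1) :=
    IsUnit.of_mul_eq_one _ (by rw [mul_comm]; exact hud)
  have hWu : IsUnit (wpart p n (v.1 1)) := wpart_isUnit p n (v.1 1)
  have hkn : pval p n (v.1 1) ≤ n := pval_le p n (v.1 1)
  have hval' : pval p n ((g : Matrix.SpecialLinearGroup (Fin 2) (ZMod (p^n))).1 1 1 * v.1 1)
      = pval p n (v.1 1) := by
    exact pval_unique p n hkn (hdu.mul hWu)
      (by conv_lhs => rw [pval_spec p n (v.1 1)]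
          ring)
  have hzero : (p : ZMod (p^n))^(pval p n (v.1 1))
      * (wpart p n ((g : Matrix.SpecialLinearGroup (Fin 2) (ZMod (p^n))).1 1 1 * v.1 1)
        - (g : Matrix.SpecialLinearGroup (Fin 2) (ZMod (p^n))).1 1 1 * wpart p n (v.1 1)) = 0 := by
    rw [mul_sub]
    have hl : (p : ZMod (p^n))^(pval p n (v.1 1))
        * wpart p n ((g : Matrix.SpecialLinearGroup (Fin 2) (ZMod (p^n))).1 1 1 * v.1 1)
        = (g : Matrix.SpecialLinearGroup (Fin 2) (ZMod (p^n))).1 1 1 * v.1 1 := by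
      conv_rhs => rw [pval_spec p n ((g : Matrix.SpecialLinearGroup (Fin 2) (ZMod (p^n))).1 1 1 * v.1 1)]
      rw [hval']
    rw [hl, sub_eq_zero]
    conv_lhs => rw [pval_spec p n (v.1 1)]
    ring
  obtain ⟨s, hs⟩ := (pk_mul_eq_zero_iff p n hkn _).mp hzero
  unfold Phi
  apply phiAux_congr p n (by rw [h1]; exact hval')
  rw [h1, h0, hval']
  exact key_dvd p n hkn _ _ _ _ _ _ _ _ hud (pval_spec p n (v.1 1)) hs

end PhiDef
section Inj

set_option linter.unusedSectionVars false

variable (p : ℕ) [hp : Fact p.Prime] (n : ℕ) [NeZero n]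

/-- An explicit upper-triangular element of `SL₂`. -/
def borelT (u : (ZMod (p^n))ˣ) (x : ZMod (p^n)) :
    Matrix.SpecialLinearGroup (Fin 2) (ZMod (p^n)) :=
  ⟨!![(u : ZMod (p^n)), x; 0, ((u⁻¹ : (ZMod (p^n))ˣ) : ZMod (p^n))], by
    rw [Matrix.det_fin_two_of]
    simp⟩

theorem borelT_mem (u : (ZMod (p^n))ˣ) (x : ZMod (p^n)) :
    borelT p n u x ∈ Gamma0 (ZMod (p^n)) := by
  show (borelT p n u x).1 1 0 = 0
  simp [borelT]

theorem borelT_smul (u : (ZMod (p^n))ˣ) (x : ZMod (p^n)) (v : F1 (ZMod (p^n)))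
    (i : Fin 2) :
    ((⟨borelT p n u x, borelT_mem p n u x⟩ : Gamma0 (ZMod (p^n))) • v).1 i
      = ![(u : ZMod (p^n)) * v.1 0 + x * v.1 1,
          ((u⁻¹ : (ZMod (p^n))ˣ) : ZMod (p^n)) * v.1 1] i := by
  show ((borelT p n u x).1.mulVec v.1) i = _
  fin_cases i <;>
    simp [borelT, Matrix.mulVec, dotProduct, Fin.sum_univ_two, Matrix.vecHead, Matrix.vecTail]

theorem exists_g (v v' : F1 (ZMod (p^n))) (h : Phi p n v = Phi p n v') :
    ∃ g : Gamma0 (ZMod (p^n)), g • v = v' := by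
  unfold Phi at h
  obtain ⟨hk, hdvd⟩ := phiAux_inj p n (Phi_isUnit p n v) (Phi_isUnit p n v') h
  obtain ⟨t, ht⟩ := hdvd
  set k := pval p n (v.1 1) with hkdef
  have hkn : k ≤ n := pval_le p n (v.1 1)
  have hWu : IsUnit (wpart p n (v.1 1)) := wpart_isUnit p n (v.1 1)
  have hW'u : IsUnit (wpart p n (v'.1 1)) := wpart_isUnit p n (v'.1 1)
  have hb : v.1 1 = (p : ZMod (p^n))^k * wpart p n (v.1 1) := pval_spec p n (v.1 1)
  have hb' : v'.1 1 = (p : ZMod (p^n))^k * wpart p n (v'.1 1) := by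
    conv_lhs => rw [pval_spec p n (v'.1 1)]
    rw [← hk]
  -- abbreviations
  have hWi : wpart p n (v.1 1) * (↑hWu.unit⁻¹ : ZMod (p^n)) = 1 := IsUnit.mul_val_inv hWu
  have hW'i : wpart p n (v'.1 1) * (↑hW'u.unit⁻¹ : ZMod (p^n)) = 1 := IsUnit.mul_val_inv hW'u
  by_cases hc : k ≤ n - k
  · -- min = k
    have hm : min k (n - k) = k := min_eq_left hc
    rw [hm] at ht
    refine ⟨⟨borelT p n (hWu.unit * hW'u.unit⁻¹)
      (-((↑hW'u.unit⁻¹ : ZMod (p^n)) * ((↑hWu.unit⁻¹ : ZMod (p^n)) * t))), borelT_mem p n _ _⟩, ?_⟩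
    apply Subtype.ext
    funext i
    rw [borelT_smul]
    fin_cases i
    · show (↑(hWu.unit * hW'u.unit⁻¹) : ZMod (p^n)) * v.1 0
        + (-((↑hW'u.unit⁻¹ : ZMod (p^n)) * ((↑hWu.unit⁻¹ : ZMod (p^n)) * t))) * v.1 1 = v'.1 0
      simp only [Units.val_mul, IsUnit.unit_spec]
      linear_combination (-((↑hW'u.unit⁻¹ : ZMod (p^n)) * ((↑hWu.unit⁻¹ : ZMod (p^n)) * t))) * hb
        + (↑hW'u.unit⁻¹ : ZMod (p^n)) * ht
        - ((↑hW'u.unit⁻¹ : ZMod (p^n)) * (p : ZMod (p^n))^k * t) * hWi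
        + v'.1 0 * hW'i
    · show (↑(hWu.unit * hW'u.unit⁻¹)⁻¹ : ZMod (p^n)) * v.1 1 = v'.1 1
      simp only [_root_.mul_inv_rev, inv_inv, Units.val_mul, IsUnit.unit_spec]
      linear_combination (wpart p n (v'.1 1) * (↑hWu.unit⁻¹ : ZMod (p^n))) * hb - hb'
        + ((p : ZMod (p^n))^k * wpart p n (v'.1 1)) * hWi
  · -- min = n - k
    have hm : min k (n - k) = n - k := min_eq_right (by omega)
    rw [hm] at ht
    have hk1 : 1 ≤ k := by omega
    have ha : IsUnit (v.1 0) := v.2.resolve_right (b_nonunit p n hk1)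
    have ha' : IsUnit (v'.1 0) := v'.2.resolve_right (b_nonunit p n (by rw [← hk]; omega))
    have hAi : v.1 0 * (↑ha.unit⁻¹ : ZMod (p^n)) = 1 := IsUnit.mul_val_inv ha
    have hA'i : v'.1 0 * (↑ha'.unit⁻¹ : ZMod (p^n)) = 1 := IsUnit.mul_val_inv ha'
    have hpn : (p : ZMod (p^n))^k * (p : ZMod (p^n))^(n-k) = 0 := by
      rw [← pow_add]
      have h3 : k + (n - k) = n := by omega
      rw [h3]
      exact (pk_eq_zero_iff p n).mpr le_rfl
    refine ⟨⟨borelT p n (ha'.unit * ha.unit⁻¹) 0, borelT_mem p n _ _⟩, ?_⟩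
    apply Subtype.ext
    funext i
    rw [borelT_smul]
    fin_cases i
    · show (↑(ha'.unit * ha.unit⁻¹) : ZMod (p^n)) * v.1 0 + 0 * v.1 1 = v'.1 0
      simp only [Units.val_mul, IsUnit.unit_spec]
      linear_combination v'.1 0 * hAi
    · show (↑(ha'.unit * ha.unit⁻¹)⁻¹ : ZMod (p^n)) * v.1 1 = v'.1 1
      simp only [_root_.mul_inv_rev, inv_inv, Units.val_mul, IsUnit.unit_spec]
      linear_combination (v.1 0 * (↑ha'.unit⁻¹ : ZMod (p^n))) * hb - hb'
        + ((p : ZMod (p^n))^k * (↑ha'.unit⁻¹ : ZMod (p^n))) * ht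
        + ((p : ZMod (p^n))^k * wpart p n (v'.1 1)) * hA'i
        + ((↑ha'.unit⁻¹ : ZMod (p^n)) * t) * hpn

end Inj
section Surj

set_option linter.unusedSectionVars false

variable (p : ℕ) [hp : Fact p.Prime] (n : ℕ) [NeZero n]

instance (m : ℕ) : NeZero (p ^ m) := ⟨pow_ne_zero m hp.out.ne_zero⟩

theorem phiAux_eq_mk0 (k : ℕ) (hk : k ≤ n) (hkfin : k < n + 1) (c : ZMod (p^n))
    (uu : (ZMod (p ^ (min k (n-k))))ˣ) (hm0 : min k (n-k) = 0) :
    phiAux p n k hk c = ⟨⟨k, hkfin⟩, uu⟩ := by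
  haveI : Subsingleton (ZMod (p ^ (min k (n-k)))) := by
    rw [hm0, pow_zero]
    infer_instance
  haveI : Subsingleton (ZMod (p ^ (min k (n-k))))ˣ :=
    ⟨fun x y => Units.ext (Subsingleton.elim _ _)⟩
  unfold phiAux
  exact congrArg (fun z => (⟨⟨k, hkfin⟩, z⟩ : TT p n)) (Subsingleton.elim _ _)

theorem phiAux_eq_mk (k : ℕ) (hk : k ≤ n) (hkfin : k < n + 1) (c : ZMod (p^n))
    (uu : (ZMod (p ^ (min k (n-k))))ˣ) (hproj : proj p n k c = ↑uu) :
    phiAux p n k hk c = ⟨⟨k, hkfin⟩, uu⟩ := by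
  have hunit : IsUnit (proj p n k c) := by
    rw [hproj]; exact Units.isUnit uu
  unfold phiAux
  have hdite : (letI := Classical.dec (IsUnit (proj p n k c))
      if h : IsUnit (proj p n k c) then h.unit else 1) = uu := by
    rw [dif_pos hunit]
    exact Units.ext (by rw [IsUnit.unit_spec]; exact hproj)
  exact congrArg (fun z => (⟨⟨k, hkfin⟩, z⟩ : TT p n)) hdite

theorem Phi_surj : Function.Surjective (Phi p n) := by
  rintro ⟨⟨k, hkfin⟩, uu⟩
  have hk : k ≤ n := by omega
  set a : ZMod (p^n) :=
    (((uu : ZMod (p ^ (min k (n-k)))).val : ℕ) : ZMod (p^n))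
      + (if min k (n-k) = 0 then 1 else 0) with hadef
  set b : ZMod (p^n) := (p : ZMod (p^n))^k with hbdef
  have hvb : pval p n b = k := pval_unique p n hk isUnit_one (by rw [mul_one])
  have hwb : (p : ZMod (p^n))^(n-k) ∣ wpart p n b - 1 := by
    apply (pk_mul_eq_zero_iff p n hk _).mp
    have h1 : (p : ZMod (p^n))^k * wpart p n b = b := by
      conv_rhs => rw [pval_spec p n b]
      rw [hvb]
    rw [mul_sub, h1, mul_one, sub_eq_zero]
  have ha_unit : min k (n-k) ≠ 0 → IsUnit a := by
    intro hm0
    haveI : NeZero (min k (n-k)) := ⟨hm0⟩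
    have h1 : ¬ p ∣ ((uu : ZMod (p ^ (min k (n-k))))).val := by
      rw [← zmod_pow_isUnit_iff p (min k (n-k))]
      exact Units.isUnit uu
    rw [hadef, if_neg hm0, add_zero, zmod_pow_isUnit_iff, ZMod.val_natCast,
      Nat.dvd_mod_iff (dvd_pow_self p (NeZero.ne n))]
    exact h1
  have hun : IsUnimodular ![a, b] := by
    by_cases hk0 : k = 0
    · refine Or.inr ?_
      show IsUnit b
      rw [hbdef, hk0, pow_zero]
      exact isUnit_one
    · refine Or.inl ?_
      show IsUnit a
      by_cases hm0 : min k (n-k) = 0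
      · have huu : ((uu : ZMod (p ^ (min k (n-k))))) = 0 := by
          haveI : Subsingleton (ZMod (p ^ (min k (n-k)))) := by
            rw [hm0, pow_zero]
            infer_instance
          exact Subsingleton.elim _ _
        rw [hadef, if_pos hm0, huu, ZMod.val_zero, Nat.cast_zero, zero_add]
        exact isUnit_one
      · exact ha_unit hm0
  refine ⟨⟨![a, b], hun⟩, ?_⟩
  unfold Phi
  have hvb' : pval p n ((⟨![a, b], hun⟩ : F1 (ZMod (p^n))).1 1) = k := hvb
  refine (phiAux_congr p n hvb' (hk' := hk) (c' := a) ?_).trans ?_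
  · -- p^min ∣ wpart b * a - a
    have hv1 : (⟨![a, b], hun⟩ : F1 (ZMod (p^n))).1 1 = b := rfl
    have hv0 : (⟨![a, b], hun⟩ : F1 (ZMod (p^n))).1 0 = a := rfl
    rw [hv1, hv0, hvb]
    obtain ⟨s, hs⟩ := hwb
    refine ⟨(p : ZMod (p^n))^(n-k-(min k (n-k))) * s * a, ?_⟩
    have e2 : (p : ZMod (p^n))^(n-k)
        = (p : ZMod (p^n))^(min k (n-k)) * (p : ZMod (p^n))^(n-k-(min k (n-k))) := by
      rw [← pow_add]; congr 1; omega
    linear_combination a * hs + (s * a) * e2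
  · by_cases hm0 : min k (n-k) = 0
    · exact phiAux_eq_mk0 p n k hk hkfin a uu hm0
    · haveI : NeZero (min k (n-k)) := ⟨hm0⟩
      apply phiAux_eq_mk p n k hk hkfin a uu
      rw [hadef, if_neg hm0, add_zero]
      rw [show proj p n k ((((uu : ZMod (p ^ (min k (n-k))))).val : ℕ) : ZMod (p^n))
        = ((((uu : ZMod (p ^ (min k (n-k))))).val : ℕ) : ZMod (p ^ (min k (n-k))))
        from map_natCast _ _]
      exact ZMod.natCast_zmod_val _

end Surj
section Count

set_option linter.unusedSectionVars false

open Finset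

variable (p : ℕ) [hp : Fact p.Prime] (n : ℕ) [NeZero n]

noncomputable def orbitMap :
    MulAction.orbitRel.Quotient (Gamma0 (ZMod (p^n))) (F1 (ZMod (p^n))) → TT p n :=
  Quotient.lift (Phi p n) (by
    intro v v' h
    have h' : v ∈ MulAction.orbit (Gamma0 (ZMod (p^n))) v' := h
    obtain ⟨g, hg⟩ := h'
    rw [← hg]
    exact Phi_smul p n g v')

theorem orbitMap_bij : Function.Bijective (orbitMap p n) := by
  constructor
  · intro x y
    induction x using Quotient.ind with
    | _ v =>
      induction y using Quotient.ind with
      | _ v' =>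
        intro h
        have h2 : Phi p n v = Phi p n v' := h
        obtain ⟨g, hg⟩ := exists_g p n v' v h2.symm
        apply Quotient.sound
        exact MulAction.mem_orbit_iff.mpr ⟨g, hg⟩
  · intro t
    obtain ⟨v, hv⟩ := Phi_surj p n t
    exact ⟨Quotient.mk _ v, hv⟩

theorem card_orbits_eq :
    Nat.card (MulAction.orbitRel.Quotient (Gamma0 (ZMod (p^n))) (F1 (ZMod (p^n))))
      = ∑ k ∈ Finset.range (n+1), (p ^ (min k (n-k))).totient := by
  rw [Nat.card_eq_of_bijective _ (orbitMap_bij p n)]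
  rw [Nat.card_eq_fintype_card]
  rw [Fintype.card_sigma]
  rw [Finset.sum_congr rfl
    (fun (k : Fin (n+1)) _ => ZMod.card_units_eq_totient (p ^ (min k.1 (n - k.1))))]
  rw [← Fin.sum_univ_eq_sum_range (fun k => (p ^ (min k (n-k))).totient) (n+1)]

end Count

section Arith

open Finset

theorem tot_sum (p : ℕ) (hp : p.Prime) (s : ℕ) :
    ∑ j ∈ range (s+1), (p^j).totient = p^s := by
  induction s with
  | zero => simp
  | succ s ih =>
    rw [Finset.sum_range_succ, ih, Nat.totient_prime_pow hp (Nat.succ_pos s)]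
    have h1 : p^(s+1-1) = p^s := by simp
    rw [h1]
    calc p^s + p^s*(p-1) = p^s * (1 + (p-1)) := by ring
    _ = p^s * p := by
        congr 1
        have := hp.one_lt
        omega
    _ = p^(s+1) := by rw [pow_succ]

theorem S_odd (p : ℕ) (hp : p.Prime) (s : ℕ) :
    ∑ k ∈ range (2*s+2), (p^(min k (2*s+1-k))).totient = 2*p^s := by
  rw [show 2*s+2 = (s+1)+(s+1) by omega, Finset.sum_range_add]
  have h1 : ∑ k ∈ range (s+1), (p^(min k (2*s+1-k))).totient
      = ∑ k ∈ range (s+1), (p^k).totient := by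
    apply Finset.sum_congr rfl
    intro k hk
    rw [Finset.mem_range] at hk
    congr 2
    omega
  have h2 : ∑ i ∈ range (s+1), (p^(min (s+1+i) (2*s+1-(s+1+i)))).totient
      = ∑ i ∈ range (s+1), (p^(s-i)).totient := by
    apply Finset.sum_congr rfl
    intro i hi
    rw [Finset.mem_range] at hi
    congr 2
    omega
  have h3 : ∑ i ∈ range (s+1), (p^(s-i)).totient
      = ∑ i ∈ range (s+1), (p^i).totient := by
    have := Finset.sum_range_reflect (fun j => (p^j).totient) (s+1)
    simpa using this
  rw [h1, h2, h3, tot_sum p hp]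
  omega

theorem S_even (p : ℕ) (hp : p.Prime) (s : ℕ) (hs : 1 ≤ s) :
    ∑ k ∈ range (2*s+1), (p^(min k (2*s-k))).totient = p^s + p^(s-1) := by
  rw [show 2*s+1 = (s+1)+s by omega, Finset.sum_range_add]
  have h1 : ∑ k ∈ range (s+1), (p^(min k (2*s-k))).totient
      = ∑ k ∈ range (s+1), (p^k).totient := by
    apply Finset.sum_congr rfl
    intro k hk
    rw [Finset.mem_range] at hk
    congr 2
    omega
  have h2 : ∑ i ∈ range s, (p^(min (s+1+i) (2*s-(s+1+i)))).totient
      = ∑ i ∈ range s, (p^(s-1-i)).totient := by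
    apply Finset.sum_congr rfl
    intro i hi
    rw [Finset.mem_range] at hi
    congr 2
    omega
  have h3 : ∑ i ∈ range s, (p^(s-1-i)).totient
      = ∑ i ∈ range s, (p^i).totient := by
    have := Finset.sum_range_reflect (fun j => (p^j).totient) s
    simpa using this
  have h4 : ∑ i ∈ range s, (p^i).totient = p^(s-1) := by
    have := tot_sum p hp (s-1)
    rwa [show s-1+1 = s by omega] at this
  rw [h1, h2, h3, h4, tot_sum p hp]

end Arith
/-- For an odd prime `p` and `n ≥ 1`, the number of `Γ₀(ℤ/pⁿℤ)`-orbits on the set of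
unimodular pairs is `2·p^((n-1)/2)` if `n` is odd and `p^(n/2) + p^(n/2-1)` if `n` is even. -/
theorem card_borel_orbits_F1 (p : ℕ) [Fact p.Prime] (hp2 : p ≠ 2) (n : ℕ) [NeZero n] :
    (Odd n →
      Nat.card (MulAction.orbitRel.Quotient (Gamma0 (ZMod (p ^ n))) (F1 (ZMod (p ^ n))))
        = 2 * p ^ ((n - 1) / 2)) ∧
    (Even n →
      Nat.card (MulAction.orbitRel.Quotient (Gamma0 (ZMod (p ^ n))) (F1 (ZMod (p ^ n))))
        = p ^ (n / 2) + p ^ (n / 2 - 1)) := by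
  have hcard := card_orbits_eq p n
  constructor
  · rintro ⟨s, hs⟩
    subst hs
    rw [hcard]
    rw [show 2*s+1+1 = 2*s+2 by omega]
    rw [S_odd p ‹Fact p.Prime›.out s, show (2*s+1-1)/2 = s by omega]
  · rintro ⟨s, hs⟩
    have hs1 : 1 ≤ s := by
      have := NeZero.ne n
      omega
    subst hs
    rw [hcard]
    have htwo : s + s = 2 * s := by omega
    simp only [htwo]
    rw [S_even p ‹Fact p.Prime›.out s hs1, show (2*s)/2 = s by omega]
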